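/- Let r ≥ 1 and let F be the dual set system of the set system of open half-spaces in ℝ^r: its base set is the collection H of open affine half-spaces { x ∈ ℝ^r : ⟨a, x⟩ > b } (a ∈ ℝ^r nonzero, b ∈ ℝ), and its sets are, for each point p ∈ ℝ^r, the set { H ∈ H : p ∈ H }. Then for all s ≥ 1 and n ≥ 0, ψ^s_F(n) = (∑_{i=0}^{r} C(s,i))^n; in particular, opR_{r+1}(F) = 0. -/

import Mathlib

/-- A leaf `ξ ∈ (2^s)^n` of a `2^s`-ary element tree `T` is properly labeled by `A ⊆ X`
if for all `j < n` and `i < s`, the `i`-th coordinate of the label of the initial segment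
`ξ|_{[j]}` belongs to `A` iff `ξ(j)(i) = 1`. -/
def OpProper {X : Type*} {s : ℕ} (T : List (Fin s → Bool) → (Fin s → X)) {n : ℕ}
    (ξ : Fin n → (Fin s → Bool)) (A : Set X) : Prop :=
  ∀ (j : Fin n) (i : Fin s), (T ((List.ofFn ξ).take j.1) i ∈ A ↔ ξ j i = true)

/-- There is a `2^s`-ary element tree of height `k` with labels from `X` in which every leaf
is properly labeled by some member of `F`. -/
def HasOpTree {X : Type*} (F : Set (Set X)) (s k : ℕ) : Prop :=
  ∃ T : List (Fin s → Bool) → (Fin s → X),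
    ∀ ξ : Fin k → (Fin s → Bool), ∃ A ∈ F, OpProper T ξ A

/-- The `op_s` shatter function `ψ^s_F(n)`: the maximum number of leaves properly labeled by
members of `F` in a `2^s`-ary element tree of height `n`. -/
noncomputable def opShatter {X : Type*} (F : Set (Set X)) (s n : ℕ) : ℕ :=
  sSup {m : ℕ | ∃ T : List (Fin s → Bool) → (Fin s → X),
    m = {ξ : Fin n → (Fin s → Bool) | ∃ A ∈ F, OpProper T ξ A}.ncard}

/-- The collection of open affine half-spaces `{x ∈ ℝ^r : ⟨a,x⟩ > b}` (`a ≠ 0`). -/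
def HalfSpaces (r : ℕ) : Set (Set (Fin r → ℝ)) :=
  {H | ∃ (a : Fin r → ℝ) (b : ℝ), a ≠ 0 ∧ H = {x | b < ∑ i, a i * x i}}

/-- The dual set system of the system of open half-spaces in `ℝ^r`: its base set is the
collection of half-spaces, with one set `{H : p ∈ H}` for each point `p ∈ ℝ^r`. -/
def DualHalfSpaces (r : ℕ) : Set (Set (HalfSpaces r)) :=
  Set.range fun p : Fin r → ℝ => {H : HalfSpaces r | p ∈ H.1}

open Finset

noncomputable section
namespace OPS

variable {r s : ℕ}

def dot {r : ℕ} (a x : Fin r → ℝ) : ℝ := ∑ k, a k * x k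

def realizes {r s : ℕ} (a : Fin s → Fin r → ℝ) (b : Fin s → ℝ) (x : Fin r → ℝ)
    (ε : Fin s → Bool) : Prop := ∀ i, (b i < dot (a i) x ↔ ε i = true)

lemma dot_smul (c : ℝ) (a x : Fin r → ℝ) : dot (c • a) x = c * dot a x := by
  simp [dot, Finset.mul_sum, mul_assoc]

lemma dot_add_right (a x y : Fin r → ℝ) : dot a (x + y) = dot a x + dot a y := by
  simp [dot, mul_add, Finset.sum_add_distrib]

lemma dot_smul_right (c : ℝ) (a x : Fin r → ℝ) : dot a (c • x) = c * dot a x := by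
  simp only [dot, Finset.mul_sum, Pi.smul_apply, smul_eq_mul]
  exact Finset.sum_congr rfl fun k _ => by ring

/-- Key helper: an unrealizable pattern from a linear relation. -/
lemma helper (a : Fin s → Fin r → ℝ) (b : Fin s → ℝ) (g : Fin s → ℝ) (c : ℝ)
    (hrel : ∀ x, ∑ i, g i * (dot (a i) x - b i) = c) (i₀ : Fin s)
    (hc : c < 0 ∨ (c = 0 ∧ 0 < g i₀)) :
    ∀ x, ¬ realizes a b x (fun i => decide (0 < g i)) := by
  intro x hx
  have hterm : ∀ i, 0 ≤ g i * (dot (a i) x - b i) := by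
    intro i
    rcases lt_trichotomy (g i) 0 with h | h | h
    · have : ¬ (b i < dot (a i) x) := by
        simpa [h.not_gt] using (hx i).not
      nlinarith [le_of_not_gt this]
    · simp [h]
    · have : b i < dot (a i) x := (hx i).2 (by simp [h])
      nlinarith
  have hsum : 0 ≤ ∑ i, g i * (dot (a i) x - b i) :=
    Finset.sum_nonneg fun i _ => hterm i
  rcases hc with h | ⟨hc0, hg⟩
  · rw [hrel x] at hsum; linarith
  · have hstrict : 0 < g i₀ * (dot (a i₀) x - b i₀) := by
      have : b i₀ < dot (a i₀) x := (hx i₀).2 (by simp [hg])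
      nlinarith
    have : 0 < ∑ i, g i * (dot (a i) x - b i) :=
      Finset.sum_pos' (fun i _ => hterm i) ⟨i₀, mem_univ i₀, hstrict⟩
    rw [hrel x] at this; linarith

variable {r s : ℕ}

/-- No `r+1` half-spaces can be shattered by points of `ℝ^r`. -/
lemma noShatter (a : Fin (r+1) → Fin r → ℝ) (b : Fin (r+1) → ℝ) :
    ∃ ε : Fin (r+1) → Bool, ∀ x, ¬ realizes a b x ε := by
  have hdep : ¬ LinearIndependent ℝ a := by
    intro h
    have := h.fintype_card_le_finrank
    simp [Module.finrank_pi] at this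
  obtain ⟨g, hg0, i₀, hi₀⟩ := Fintype.not_linearIndependent_iff.mp hdep
  have hcoord : ∀ k, ∑ i, g i * a i k = 0 := by
    intro k
    have := congrFun hg0 k
    simpa [Finset.sum_apply] using this
  have hdot : ∀ x, ∑ i, g i * dot (a i) x = 0 := by
    intro x
    have : ∑ i, g i * dot (a i) x = ∑ k, (∑ i, g i * a i k) * x k := by
      simp only [dot, Finset.mul_sum, Finset.sum_mul]
      rw [Finset.sum_comm]
      exact Finset.sum_congr rfl fun k _ => Finset.sum_congr rfl fun i _ => by ring
    rw [this]
    simp [hcoord]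
  set c : ℝ := -∑ i, g i * b i with hc
  have hrel : ∀ x, ∑ i, g i * (dot (a i) x - b i) = c := by
    intro x
    simp only [mul_sub, Finset.sum_sub_distrib, hdot, hc]
    ring
  have hreln : ∀ x, ∑ i, (-g) i * (dot (a i) x - b i) = -c := by
    intro x
    simp only [Pi.neg_apply, neg_mul, Finset.sum_neg_distrib, hrel]
  rcases lt_trichotomy c 0 with h | h | h
  · exact ⟨_, helper a b g c hrel i₀ (Or.inl h)⟩
  · rcases (Ne.lt_or_gt hi₀) with hneg | hpos
    · refine ⟨_, helper a b (-g) (-c) hreln i₀ (Or.inr ⟨by rw [h]; ring, by simpa using hneg⟩)⟩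
    · exact ⟨_, helper a b g c hrel i₀ (Or.inr ⟨h, hpos⟩)⟩
  · exact ⟨_, helper a b (-g) (-c) hreln i₀ (Or.inl (by linarith))⟩

open Classical in
noncomputable def realizedFinset {r s : ℕ} (a : Fin s → Fin r → ℝ) (b : Fin s → ℝ) :
    Finset (Fin s → Bool) :=
  Finset.univ.filter (fun ε => ∃ x, realizes a b x ε)

lemma mem_realizedFinset {r s : ℕ} (a : Fin s → Fin r → ℝ) (b : Fin s → ℝ) (ε : Fin s → Bool) :
    ε ∈ realizedFinset a b ↔ ∃ x, realizes a b x ε := by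
  simp [realizedFinset]

def patToFinset {s : ℕ} (ε : Fin s → Bool) : Finset (Fin s) :=
  Finset.univ.filter (fun i => ε i = true)

lemma patToFinset_injective {s : ℕ} : Function.Injective (patToFinset (s := s)) := by
  intro ε ε' h
  funext i
  have h2 : (ε i = true) ↔ (ε' i = true) := by
    constructor
    · intro hh
      have hm : i ∈ patToFinset ε := Finset.mem_filter.2 ⟨Finset.mem_univ _, hh⟩
      rw [h] at hm; exact (Finset.mem_filter.1 hm).2
    · intro hh
      have hm : i ∈ patToFinset ε' := Finset.mem_filter.2 ⟨Finset.mem_univ _, hh⟩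
      rw [← h] at hm; exact (Finset.mem_filter.1 hm).2
  cases hε : ε i <;> cases hε' : ε' i <;> simp_all

variable {r s : ℕ}

lemma card_small_sets :
    (Finset.univ.filter (fun t : Finset (Fin s) => t.card ≤ r)).card
      = ∑ i ∈ Finset.range (r+1), s.choose i := by
  have he : Finset.univ.filter (fun t : Finset (Fin s) => t.card ≤ r)
      = (Finset.range (r+1)).biUnion (fun k => Finset.powersetCard k Finset.univ) := by
    ext t
    rw [Finset.mem_filter, Finset.mem_biUnion]
    constructor
    · intro h
      exact ⟨t.card, Finset.mem_range.2 (Nat.lt_succ_of_le h.2),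
        Finset.mem_powersetCard_univ.2 rfl⟩
    · rintro ⟨k, hk, hmem⟩
      rw [Finset.mem_powersetCard_univ] at hmem
      exact ⟨Finset.mem_univ t, hmem ▸ Nat.lt_succ_iff.1 (Finset.mem_range.1 hk)⟩
  rw [he, Finset.card_biUnion]
  · exact Finset.sum_congr rfl fun k _ => by
      simp [Finset.card_powersetCard]
  · intro k _ l _ hkl
    simp only [Finset.disjoint_left, Finset.mem_powersetCard_univ]
    intro t h1 h2
    exact hkl (h1 ▸ h2 ▸ rfl)

lemma realized_card_le (a : Fin s → Fin r → ℝ) (b : Fin s → ℝ) :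
    (realizedFinset a b).card ≤ ∑ i ∈ Finset.range (r+1), s.choose i := by
  classical
  set 𝒜 : Finset (Finset (Fin s)) := (realizedFinset a b).image patToFinset with h𝒜
  have hcard : (realizedFinset a b).card = 𝒜.card :=
    (Finset.card_image_of_injective _ patToFinset_injective).symm
  rw [hcard]
  refine (Finset.card_le_card_shatterer 𝒜).trans ?_
  rw [← card_small_sets (r := r) (s := s)]
  apply Finset.card_le_card
  intro t ht
  simp only [Finset.mem_filter, Finset.mem_univ, true_and]
  by_contra hcard'
  push_neg at hcard'
  obtain ⟨t', ht'sub, ht'card⟩ := Finset.exists_subset_card_eq (s := t) (n := r+1) (Nat.succ_le_of_lt hcard')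
  have hshat : 𝒜.Shatters t' :=
    Finset.Shatters.mono_right ht'sub (Finset.mem_shatterer.1 ht)
  set iso := t'.orderIsoOfFin ht'card with hiso
  set e : Fin (r+1) → Fin s := fun i => (iso i : Fin s) with he
  have hemem : ∀ i, e i ∈ t' := fun i => (iso i).2
  have heinj : Function.Injective e := fun i j hij => iso.injective (Subtype.ext hij)
  obtain ⟨ε', hε'⟩ := noShatter (fun i => a (e i)) (fun i => b (e i))
  set tsub : Finset (Fin s) := (Finset.univ.filter (fun i => ε' i = true)).image e with htsub
  have htsub_sub : tsub ⊆ t' := by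
    intro j hj
    obtain ⟨i, _, rfl⟩ := Finset.mem_image.1 hj
    exact hemem i
  obtain ⟨u, hu, hint⟩ := hshat htsub_sub
  obtain ⟨ε, hεreal, rfl⟩ := Finset.mem_image.1 hu
  rw [mem_realizedFinset] at hεreal
  obtain ⟨x, hx⟩ := hεreal
  refine hε' x ?_
  intro i
  have h1 := hx (e i)
  have h2 : ε (e i) = true ↔ e i ∈ patToFinset ε := by
    simp [patToFinset]
  have h3 : e i ∈ patToFinset ε ↔ e i ∈ tsub := by
    constructor
    · intro hmem
      have : e i ∈ t' ∩ patToFinset ε := Finset.mem_inter.2 ⟨hemem i, hmem⟩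
      rw [hint] at this; exact this
    · intro hmem
      have : e i ∈ t' ∩ patToFinset ε := hint ▸ hmem
      exact (Finset.mem_inter.1 this).2
  have h4 : e i ∈ tsub ↔ ε' i = true := by
    rw [htsub]
    constructor
    · intro hmem
      obtain ⟨i', hi', hee⟩ := Finset.mem_image.1 hmem
      have := heinj hee
      subst this
      exact (Finset.mem_filter.1 hi').2
    · intro hmem
      exact Finset.mem_image.2 ⟨i, Finset.mem_filter.2 ⟨Finset.mem_univ _, hmem⟩, rfl⟩
  exact h1.trans (h2.trans (h3.trans h4))



section POLY
open Polynomial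
variable {r s : ℕ}

def uu (j : Fin s) : ℝ := (j : ℕ) + 1/2

lemma uu_pos (j : Fin s) : 0 < uu j := by
  unfold uu; positivity

def qpoly (D : Finset (Fin s)) : Polynomial ℝ :=
  -∏ j ∈ D, (Polynomial.C (-(uu j)⁻¹) * Polynomial.X + Polynomial.C 1)

lemma qpoly_eval (D : Finset (Fin s)) (t : ℝ) :
    (qpoly D).eval t = -∏ j ∈ D, (1 - (uu j)⁻¹ * t) := by
  simp only [qpoly, eval_neg, eval_prod, eval_add, eval_mul, eval_C, eval_X]
  congr 1
  exact Finset.prod_congr rfl fun j _ => by ring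

lemma qpoly_coeff_zero (D : Finset (Fin s)) : (qpoly D).coeff 0 = -1 := by
  rw [Polynomial.coeff_zero_eq_eval_zero, qpoly_eval]
  simp

lemma qpoly_natDegree (D : Finset (Fin s)) : (qpoly D).natDegree ≤ D.card := by
  rw [qpoly, natDegree_neg]
  refine (Polynomial.natDegree_prod_le D _).trans ?_
  refine le_trans (Finset.sum_le_sum fun j _ =>
    (Polynomial.natDegree_linear_le :
      (Polynomial.C (-(uu j)⁻¹) * Polynomial.X + Polynomial.C 1).natDegree ≤ 1)) ?_
  simp


def baseA (r s : ℕ) : Fin s → Fin r → ℝ := fun i k => ((i : ℕ) + 1 : ℝ) ^ ((k : ℕ) + 1)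
def baseB (s : ℕ) : Fin s → ℝ := fun _ => 1
def wit (r : ℕ) {s : ℕ} (D : Finset (Fin s)) : Fin r → ℝ := fun k => (qpoly D).coeff ((k : ℕ) + 1)
def epsOf {s : ℕ} (D : Finset (Fin s)) : Fin s → Bool :=
  fun i => decide (Odd (D.filter (fun j => j ≤ i)).card)

lemma dot_wit {D : Finset (Fin s)} (hD : D.card ≤ r) (i : Fin s) :
    dot (baseA r s i) (wit r D) = (qpoly D).eval ((i : ℕ) + 1 : ℝ) + 1 := by
  have hdeg : (qpoly D).natDegree < r + 1 := Nat.lt_succ_of_le ((qpoly_natDegree D).trans hD)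
  have h1 : dot (baseA r s i) (wit r D)
      = ∑ k ∈ Finset.range r, ((i:ℕ)+1:ℝ)^(k+1) * (qpoly D).coeff (k+1) :=
    Fin.sum_univ_eq_sum_range (fun k => ((i:ℕ)+1:ℝ)^(k+1) * (qpoly D).coeff (k+1)) r
  rw [Polynomial.eval_eq_sum_range' hdeg, Finset.sum_range_succ', qpoly_coeff_zero, h1]
  simp only [pow_zero, mul_one]
  have h2 : ∀ k ∈ Finset.range r, ((i:ℕ)+1:ℝ)^(k+1) * (qpoly D).coeff (k+1)
      = (qpoly D).coeff (k+1) * ((i:ℕ)+1:ℝ)^(k+1) := fun k _ => mul_comm _ _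
  rw [Finset.sum_congr rfl h2]
  ring

lemma qpoly_eval_sign (D : Finset (Fin s)) (i : Fin s) :
    (0 < (qpoly D).eval ((i:ℕ)+1:ℝ) ↔ Odd (D.filter (fun j => j ≤ i)).card)
    ∧ (qpoly D).eval ((i:ℕ)+1:ℝ) ≠ 0 := by
  set t : ℝ := (i:ℕ)+1 with ht
  rw [qpoly_eval]
  set A := D.filter (fun j => j ≤ i) with hA
  set B := D.filter (fun j => ¬ j ≤ i) with hB
  have hsplit : ∏ j ∈ D, (1 - (uu j)⁻¹ * t)
      = (∏ j ∈ A, (1 - (uu j)⁻¹ * t)) * ∏ j ∈ B, (1 - (uu j)⁻¹ * t) :=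
    (Finset.prod_filter_mul_prod_filter_not D _ _).symm
  have hBpos : 0 < ∏ j ∈ B, (1 - (uu j)⁻¹ * t) := by
    refine Finset.prod_pos fun j hj => ?_
    have hij : ¬ j ≤ i := (Finset.mem_filter.1 hj).2
    have hlt : (i:ℕ) < (j:ℕ) := Fin.lt_def.1 (lt_of_not_ge hij)
    have hcast : ((i:ℕ):ℝ) + 1 ≤ ((j:ℕ):ℝ) := by exact_mod_cast Nat.succ_le_of_lt hlt
    have htu : t < uu j := by rw [ht]; unfold uu; linarith
    have hu := uu_pos j
    have hx := mul_pos (inv_pos.2 hu) (sub_pos.2 htu)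
    have hc : (uu j)⁻¹ * uu j = 1 := inv_mul_cancel₀ (ne_of_gt hu)
    nlinarith
  have hApos : 0 < ∏ j ∈ A, ((uu j)⁻¹ * t - 1) := by
    refine Finset.prod_pos fun j hj => ?_
    have hij : j ≤ i := (Finset.mem_filter.1 hj).2
    have hle : (j:ℕ) ≤ (i:ℕ) := Fin.le_def.1 hij
    have hcast : ((j:ℕ):ℝ) ≤ ((i:ℕ):ℝ) := by exact_mod_cast hle
    have htu : uu j < t := by rw [ht]; unfold uu; linarith
    have hu := uu_pos j
    have hx := mul_pos (inv_pos.2 hu) (sub_pos.2 htu)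
    have hc : (uu j)⁻¹ * uu j = 1 := inv_mul_cancel₀ (ne_of_gt hu)
    nlinarith
  have hAeq : ∏ j ∈ A, (1 - (uu j)⁻¹ * t)
      = (-1:ℝ)^A.card * ∏ j ∈ A, ((uu j)⁻¹ * t - 1) := by
    rw [← Finset.prod_const, ← Finset.prod_mul_distrib]
    exact Finset.prod_congr rfl fun j _ => by ring
  rw [hsplit, hAeq]
  rcases Nat.even_or_odd A.card with he | ho
  · have h1 : (-1:ℝ)^A.card = 1 := he.neg_one_pow
    rw [h1]
    constructor
    · constructor
      · intro h
        nlinarith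
      · intro h
        exact absurd h (Nat.not_odd_iff_even.2 he)
    · nlinarith
  · have h1 : (-1:ℝ)^A.card = -1 := ho.neg_one_pow
    rw [h1]
    constructor
    · exact ⟨fun _ => ho, fun _ => by nlinarith⟩
    · nlinarith


def sreal {r s : ℕ} (a : Fin s → Fin r → ℝ) (b : Fin s → ℝ) (x : Fin r → ℝ)
    (ε : Fin s → Bool) : Prop :=
  ∀ i, if ε i = true then b i < dot (a i) x else dot (a i) x < b i

lemma sreal.realizes {a : Fin s → Fin r → ℝ} {b : Fin s → ℝ} {x : Fin r → ℝ}
    {ε : Fin s → Bool} (h : sreal a b x ε) : realizes a b x ε := by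
  intro i
  have := h i
  by_cases hε : ε i = true <;> simp [hε] at this ⊢
  · exact this
  · exact le_of_lt this

lemma base_sreal {D : Finset (Fin s)} (hD : D.card ≤ r) :
    sreal (baseA r s) (baseB s) (wit r D) (epsOf D) := by
  intro i
  obtain ⟨hiff, hne⟩ := qpoly_eval_sign D i
  rw [dot_wit hD i]
  unfold baseB epsOf
  by_cases h : Odd (D.filter (fun j => j ≤ i)).card
  · rw [if_pos (by simpa using h)]
    have := hiff.2 h
    linarith
  · rw [if_neg (by simpa using h)]
    have h2 : ¬ 0 < (qpoly D).eval ((i:ℕ)+1:ℝ) := fun hc => h (hiff.1 hc)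
    have h3 := lt_of_le_of_ne (not_lt.1 h2) hne
    linarith

lemma filter_le_card (D : Finset (Fin s)) (i : Fin s) :
    (D.filter (fun j => j ≤ i)).card
      = (D.filter (fun j => j < i)).card + (if i ∈ D then 1 else 0) := by
  classical
  have he : D.filter (fun j => j ≤ i)
      = D.filter (fun j => j < i) ∪ D.filter (fun j => j = i) := by
    ext j
    simp only [Finset.mem_filter, Finset.mem_union]
    constructor
    · rintro ⟨hj, hle⟩
      rcases lt_or_eq_of_le hle with h | h
      · exact Or.inl ⟨hj, h⟩
      · exact Or.inr ⟨hj, h⟩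
    · rintro (⟨hj, h⟩ | ⟨hj, h⟩)
      · exact ⟨hj, le_of_lt h⟩
      · exact ⟨hj, le_of_eq h⟩
  have hdisj : Disjoint (D.filter (fun j => j < i)) (D.filter (fun j => j = i)) := by
    simp only [Finset.disjoint_left, Finset.mem_filter]
    rintro j ⟨_, hlt⟩ ⟨_, rfl⟩
    exact lt_irrefl _ hlt
  rw [he, Finset.card_union_of_disjoint hdisj, Finset.filter_eq']
  by_cases h : i ∈ D <;> simp [h]

lemma epsOf_injective : Function.Injective (epsOf (s := s)) := by
  intro D D' h
  have key : ∀ m : ℕ, ∀ j : Fin s, (j : ℕ) < m → (j ∈ D ↔ j ∈ D') := by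
    intro m
    induction m using Nat.strong_induction_on with
    | _ m IH =>
      intro j hjm
      have IHj : ∀ j' : Fin s, j' < j → (j' ∈ D ↔ j' ∈ D') := fun j' hlt =>
        IH (j : ℕ) hjm j' (Fin.lt_def.1 hlt)
      have hfilt : D.filter (fun j' => j' < j) = D'.filter (fun j' => j' < j) := by
        ext j'
        simp only [Finset.mem_filter]
        exact ⟨fun ⟨hj', hlt⟩ => ⟨(IHj j' hlt).1 hj', hlt⟩,
          fun ⟨hj', hlt⟩ => ⟨(IHj j' hlt).2 hj', hlt⟩⟩
      have hj := congrFun h j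
      unfold epsOf at hj
      rw [decide_eq_decide] at hj
      rw [filter_le_card, filter_le_card, hfilt] at hj
      by_cases h1 : j ∈ D <;> by_cases h2 : j ∈ D'
      · simp [h1, h2]
      · exfalso
        rw [if_pos h1, if_neg h2, add_zero, Nat.odd_add_one] at hj
        exact iff_not_self hj.symm
      · exfalso
        rw [if_neg h1, if_pos h2, add_zero, Nat.odd_add_one] at hj
        exact iff_not_self hj
      · simp [h1, h2]
  ext j
  exact key ((j : ℕ) + 1) j (Nat.lt_succ_self _)

noncomputable def goodPats (r s : ℕ) : Finset (Fin s → Bool) :=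
  (Finset.univ.filter (fun t : Finset (Fin s) => t.card ≤ r)).image epsOf

lemma goodPats_card : (goodPats r s).card = ∑ i ∈ Finset.range (r+1), s.choose i := by
  rw [goodPats, Finset.card_image_of_injective _ epsOf_injective, card_small_sets]

lemma mem_goodPats {ε : Fin s → Bool} :
    ε ∈ goodPats r s ↔ ∃ D : Finset (Fin s), D.card ≤ r ∧ ε = epsOf D := by
  simp only [goodPats, Finset.mem_image, Finset.mem_filter, Finset.mem_univ, true_and]
  constructor
  · rintro ⟨D, hD, rfl⟩; exact ⟨D, hD, rfl⟩
  · rintro ⟨D, hD, rfl⟩; exact ⟨D, hD, rfl⟩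

lemma base_realized : realizedFinset (baseA r s) (baseB s) = goodPats r s := by
  have hsub : goodPats r s ⊆ realizedFinset (baseA r s) (baseB s) := by
    intro ε hε
    obtain ⟨D, hD, rfl⟩ := mem_goodPats.1 hε
    exact (mem_realizedFinset _ _ _).2 ⟨wit r D, (base_sreal hD).realizes⟩
  have hle : (realizedFinset (baseA r s) (baseB s)).card ≤ (goodPats r s).card := by
    rw [goodPats_card]; exact realized_card_le _ _
  exact (Finset.eq_of_subset_of_card_le hsub hle).symm


lemma dot_sub_right (a x y : Fin r → ℝ) : dot a (x - y) = dot a x - dot a y := by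
  simp [dot, mul_sub, Finset.sum_sub_distrib]

lemma baseA_ne_zero (hr : 1 ≤ r) (i : Fin s) : baseA r s i ≠ 0 := by
  intro h
  have := congrFun h ⟨0, hr⟩
  simp only [baseA, Pi.zero_apply] at this
  have hpos : (0:ℝ) < ((i:ℕ) + 1 : ℝ) ^ ((0:ℕ) + 1) := by positivity
  rw [this] at hpos
  exact lt_irrefl _ hpos

lemma isOpen_sregion (a : Fin s → Fin r → ℝ) (b : Fin s → ℝ) (ε : Fin s → Bool) :
    IsOpen {x : Fin r → ℝ | sreal a b x ε} := by
  have he : {x : Fin r → ℝ | sreal a b x ε}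
      = ⋂ i, {x : Fin r → ℝ | if ε i = true then b i < dot (a i) x else dot (a i) x < b i} := by
    ext x
    simp [sreal, Set.mem_iInter]
  rw [he]
  refine isOpen_iInter_of_finite fun i => ?_
  have hc : Continuous fun x : Fin r → ℝ => dot (a i) x := by
    unfold dot
    exact continuous_finset_sum _ fun k _ => continuous_const.mul (continuous_apply k)
  by_cases hε : ε i = true
  · simp only [hε, if_true]
    exact isOpen_lt continuous_const hc
  · simp only [hε, if_false]
    exact isOpen_lt hc continuous_const

lemma transform_iff {a : Fin r → ℝ} {bb : ℝ} {p y : Fin r → ℝ} {δ : ℝ} (hδ : 0 < δ) :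
    bb + δ⁻¹ * dot a p < dot (δ⁻¹ • a) y ↔ bb < dot a (δ⁻¹ • (y - p)) := by
  rw [dot_smul, dot_smul_right, dot_sub_right]
  constructor <;> intro h <;> nlinarith

lemma transform_iff' {a : Fin r → ℝ} {bb : ℝ} {p y : Fin r → ℝ} {δ : ℝ} (hδ : 0 < δ) :
    dot (δ⁻¹ • a) y < bb + δ⁻¹ * dot a p ↔ dot a (δ⁻¹ • (y - p)) < bb := by
  rw [dot_smul, dot_smul_right, dot_sub_right]
  constructor <;> intro h <;> nlinarith

lemma shift_eq {p x : Fin r → ℝ} {δ : ℝ} (hδ : 0 < δ) :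
    δ⁻¹ • ((p + δ • x) - p) = x := by
  rw [add_sub_cancel_left, smul_smul, inv_mul_cancel₀ (ne_of_gt hδ), one_smul]

lemma step (hr : 1 ≤ r) (V : Set (Fin r → ℝ)) (hVo : IsOpen V) (hVne : V.Nonempty) :
    ∃ ab : (Fin s → Fin r → ℝ) × (Fin s → ℝ), (∀ i, ab.1 i ≠ 0) ∧
      realizedFinset ab.1 ab.2 = goodPats r s ∧
      ∀ ε ∈ goodPats r s, ∃ x ∈ V, sreal ab.1 ab.2 x ε := by
  classical
  obtain ⟨p, hp⟩ := hVne
  obtain ⟨ρ, hρ, hball⟩ := Metric.isOpen_iff.1 hVo p hp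
  set M : ℝ := ∑ D ∈ Finset.univ.filter (fun t : Finset (Fin s) => t.card ≤ r), ‖wit r D‖
    with hMdef
  have hM0 : 0 ≤ M := Finset.sum_nonneg fun D _ => norm_nonneg _
  set δ := ρ / (M + 1) with hδdef
  have hδ : 0 < δ := div_pos hρ (by linarith)
  refine ⟨⟨fun i => δ⁻¹ • baseA r s i, fun i => baseB s i + δ⁻¹ * dot (baseA r s i) p⟩,
    fun i => smul_ne_zero (inv_ne_zero (ne_of_gt hδ)) (baseA_ne_zero hr i), ?_, ?_⟩
  · ext ε
    rw [mem_realizedFinset, ← base_realized, mem_realizedFinset]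
    constructor
    · rintro ⟨y, hy⟩
      exact ⟨δ⁻¹ • (y - p), fun i => (transform_iff hδ).symm.trans (hy i)⟩
    · rintro ⟨x, hx⟩
      refine ⟨p + δ • x, fun i => ?_⟩
      rw [transform_iff hδ, shift_eq hδ]
      exact hx i
  · intro ε hε
    obtain ⟨D, hD, rfl⟩ := mem_goodPats.1 hε
    refine ⟨p + δ • wit r D, ?_, ?_⟩
    · apply hball
      rw [Metric.mem_ball, dist_eq_norm, add_sub_cancel_left, norm_smul,
        Real.norm_of_nonneg (le_of_lt hδ)]
      have hwM : ‖wit r D‖ ≤ M := by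
        rw [hMdef]
        exact Finset.single_le_sum (fun D _ => norm_nonneg (wit r D))
          (Finset.mem_filter.2 ⟨Finset.mem_univ _, hD⟩)
      have : δ * (M + 1) = ρ := by
        rw [hδdef]; field_simp
      nlinarith
    · intro i
      have hbase := base_sreal (r := r) hD i
      by_cases hb : epsOf D i = true
      · rw [if_pos hb] at hbase ⊢
        rw [transform_iff hδ, shift_eq hδ]
        exact hbase
      · rw [if_neg hb] at hbase ⊢
        rw [transform_iff' hδ, shift_eq hδ]
        exact hbase

def ArrOK (s : ℕ) (V : Set (Fin r → ℝ)) (ab : (Fin s → Fin r → ℝ) × (Fin s → ℝ)) : Prop :=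
  (∀ i, ab.1 i ≠ 0) ∧ realizedFinset ab.1 ab.2 = goodPats r s ∧
    ((IsOpen V ∧ V.Nonempty) → ∀ ε ∈ goodPats r s, ∃ x ∈ V, sreal ab.1 ab.2 x ε)

lemma exists_arrOK (hr : 1 ≤ r) (s : ℕ) (V : Set (Fin r → ℝ)) : ∃ ab, ArrOK s V ab := by
  by_cases h : IsOpen V ∧ V.Nonempty
  · obtain ⟨ab, h1, h2, h3⟩ := step (s := s) hr V h.1 h.2
    exact ⟨ab, h1, h2, fun _ => h3⟩
  · exact ⟨(baseA r s, baseB s), fun i => baseA_ne_zero hr i, base_realized,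
      fun hc => absurd hc h⟩

noncomputable def chooseArr (hr : 1 ≤ r) (s : ℕ) (V : Set (Fin r → ℝ)) :
    (Fin s → Fin r → ℝ) × (Fin s → ℝ) :=
  Classical.choose (exists_arrOK hr s V)

lemma chooseArr_spec (hr : 1 ≤ r) (s : ℕ) (V : Set (Fin r → ℝ)) :
    ArrOK s V (chooseArr hr s V) :=
  Classical.choose_spec (exists_arrOK hr s V)

noncomputable def regionR (hr : 1 ≤ r) (s : ℕ) : List (Fin s → Bool) → Set (Fin r → ℝ)
  | [] => Set.univ
  | ε :: m => regionR hr s m ∩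
      {x | sreal (chooseArr hr s (regionR hr s m)).1 (chooseArr hr s (regionR hr s m)).2 x ε}

def mkHS {r : ℕ} (a : Fin r → ℝ) (b : ℝ) (ha : a ≠ 0) : HalfSpaces r :=
  ⟨{x | b < ∑ k, a k * x k}, ⟨a, b, ha, rfl⟩⟩

noncomputable def theTree (hr : 1 ≤ r) (s : ℕ) : List (Fin s → Bool) → Fin s → HalfSpaces r :=
  fun l i => mkHS ((chooseArr hr s (regionR hr s l.reverse)).1 i)
    ((chooseArr hr s (regionR hr s l.reverse)).2 i)
    ((chooseArr_spec hr s _).1 i)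

lemma regionR_append (hr : 1 ≤ r) (s : ℕ) (l1 l2 : List (Fin s → Bool)) :
    regionR hr s (l1 ++ l2) ⊆ regionR hr s l2 := by
  induction l1 with
  | nil => exact subset_rfl
  | cons ε l1 IH =>
    refine subset_trans ?_ IH
    exact Set.inter_subset_left

lemma regionR_good (hr : 1 ≤ r) (s : ℕ) (m : List (Fin s → Bool))
    (hm : ∀ ε ∈ m, ε ∈ goodPats r s) :
    IsOpen (regionR hr s m) ∧ (regionR hr s m).Nonempty := by
  induction m with
  | nil => exact ⟨isOpen_univ, ⟨0, Set.mem_univ 0⟩⟩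
  | cons ε m IH =>
    have h := IH (fun ε' hε' => hm ε' (List.mem_cons_of_mem _ hε'))
    have hspec := chooseArr_spec hr s (regionR hr s m)
    obtain ⟨x, hxV, hxs⟩ := hspec.2.2 h (ε) (hm ε List.mem_cons_self)
    exact ⟨h.1.inter (isOpen_sregion _ _ _), ⟨x, hxV, hxs⟩⟩

lemma take_ofFn_succ {n : ℕ} (ξ : Fin n → (Fin s → Bool)) (j : Fin n) :
    (List.ofFn ξ).take ((j : ℕ) + 1) = (List.ofFn ξ).take (j : ℕ) ++ [ξ j] := by
  rw [List.take_succ]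
  congr
  have : (List.ofFn ξ)[(j : ℕ)]? = some (ξ j) := by
    rw [List.getElem?_eq_getElem (by simp [j.2])]
    simp
  simp [this]

lemma proper_iff (hr : 1 ≤ r) {s n : ℕ} (ξ : Fin n → (Fin s → Bool)) :
    (∃ A ∈ DualHalfSpaces r, OpProper (theTree hr s) ξ A) ↔ ∀ j, ξ j ∈ goodPats r s := by
  constructor
  · rintro ⟨A, hA, hprop⟩
    obtain ⟨p, rfl⟩ := hA
    intro j
    have hreal : realizes (chooseArr hr s (regionR hr s ((List.ofFn ξ).take (j : ℕ)).reverse)).1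
        (chooseArr hr s (regionR hr s ((List.ofFn ξ).take (j : ℕ)).reverse)).2 p (ξ j) := by
      intro i
      exact hprop j i
    have := (mem_realizedFinset _ _ (ξ j)).2 ⟨p, hreal⟩
    rwa [(chooseArr_spec hr s _).2.1] at this
  · intro hgood
    set L := List.ofFn ξ with hL
    have hLgood : ∀ ε ∈ L.reverse, ε ∈ goodPats r s := by
      intro ε hε
      rw [List.mem_reverse, hL, List.mem_ofFn] at hε
      obtain ⟨j, rfl⟩ := hε
      exact hgood j
    obtain ⟨p, hp⟩ := (regionR_good hr s L.reverse hLgood).2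
    refine ⟨{H : HalfSpaces r | p ∈ H.1}, ⟨p, rfl⟩, ?_⟩
    intro j i
    have hmem : p ∈ regionR hr s ((L.take ((j : ℕ) + 1)).reverse) := by
      have hsplit : L.reverse = (L.drop ((j:ℕ)+1)).reverse ++ (L.take ((j:ℕ)+1)).reverse := by
        rw [← List.reverse_append, List.take_append_drop]
      rw [hsplit] at hp
      exact regionR_append hr s _ _ hp
    rw [take_ofFn_succ ξ j] at hmem
    rw [List.reverse_append] at hmem
    simp only [List.reverse_cons, List.reverse_nil, List.nil_append, List.singleton_append] at hmem
    have hs2 : sreal (chooseArr hr s (regionR hr s ((L.take (j:ℕ)).reverse))).1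
        (chooseArr hr s (regionR hr s ((L.take (j:ℕ)).reverse))).2 p (ξ j) := hmem.2
    have hi := hs2 i
    show ((chooseArr hr s (regionR hr s ((L.take (j:ℕ)).reverse))).2 i
        < dot ((chooseArr hr s (regionR hr s ((L.take (j:ℕ)).reverse))).1 i) p) ↔ ξ j i = true
    by_cases hb : ξ j i = true
    · rw [if_pos hb] at hi
      exact iff_of_true hi hb
    · rw [if_neg hb] at hi
      exact iff_of_false (not_lt.2 (le_of_lt hi)) hb

lemma ncard_eq_filter_card {α : Type*} [Fintype α] (P : α → Prop) [DecidablePred P] :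
    {x | P x}.ncard = (Finset.univ.filter P).card := by
  rw [← Set.ncard_coe_finset]
  congr 1
  ext x
  simp

lemma tree_ncard (hr : 1 ≤ r) (s n : ℕ) :
    {ξ : Fin n → (Fin s → Bool) | ∃ A ∈ DualHalfSpaces r, OpProper (theTree hr s) ξ A}.ncard
      = (∑ i ∈ Finset.range (r+1), s.choose i) ^ n := by
  classical
  have h1 : {ξ : Fin n → (Fin s → Bool) | ∃ A ∈ DualHalfSpaces r, OpProper (theTree hr s) ξ A}
      = ↑(Fintype.piFinset (fun _ : Fin n => goodPats r s)) := by
    ext ξ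
    simp only [Set.mem_setOf_eq, Finset.coe_sort_coe, Fintype.mem_piFinset, Finset.mem_coe]
    rw [proper_iff hr]
  rw [h1, Set.ncard_coe_finset, Fintype.card_piFinset]
  simp [goodPats_card]

lemma exists_arr {r s : ℕ} (T0 : Fin s → HalfSpaces r) :
    ∃ (a : Fin s → Fin r → ℝ) (b : Fin s → ℝ), ∀ i, (T0 i).1 = {x | b i < dot (a i) x} := by
  have h : ∀ i, ∃ (a : Fin r → ℝ) (bb : ℝ), a ≠ 0 ∧ (T0 i).1 = {x | bb < ∑ k, a k * x k} :=
    fun i => (T0 i).2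
  choose a b _ hs using h
  exact ⟨a, b, hs⟩

lemma ub (hr : 1 ≤ r) {s : ℕ} : ∀ (n : ℕ) (T : List (Fin s → Bool) → Fin s → HalfSpaces r),
    {ξ : Fin n → (Fin s → Bool) | ∃ A ∈ DualHalfSpaces r, OpProper T ξ A}.ncard
      ≤ (∑ i ∈ Finset.range (r+1), s.choose i) ^ n := by
  classical
  intro n
  induction n with
  | zero =>
    intro T
    rw [pow_zero]
    refine le_trans (Set.ncard_le_ncard (Set.subset_univ _) Set.finite_univ) ?_
    rw [Set.ncard_univ]
    simp [Nat.card_eq_fintype_card]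
  | succ n IH =>
    intro T
    obtain ⟨a, b, hab⟩ := exists_arr (T [])
    rw [ncard_eq_filter_card]
    set S := Finset.univ.filter
      (fun ξ : Fin (n+1) → (Fin s → Bool) => ∃ A ∈ DualHalfSpaces r, OpProper T ξ A) with hS
    set Φ : (Fin (n+1) → (Fin s → Bool)) → (Fin s → Bool) × (Fin n → (Fin s → Bool)) :=
      fun ξ => (ξ 0, fun j => ξ j.succ) with hΦ
    have hΦinj : Function.Injective Φ := by
      intro ξ ξ' h
      have h0 : ξ 0 = ξ' 0 := congrArg Prod.fst h
      have ht : (fun j : Fin n => ξ j.succ) = (fun j => ξ' j.succ) := congrArg Prod.snd h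
      funext j
      refine Fin.cases ?_ ?_ j
      · exact h0
      · exact fun j' => congrFun ht j'
    have hScard : S.card = (S.image Φ).card :=
      (Finset.card_image_of_injective _ hΦinj).symm
    set Sε : (Fin s → Bool) → Finset (Fin n → (Fin s → Bool)) := fun ε =>
      Finset.univ.filter
        (fun ξ' : Fin n → (Fin s → Bool) =>
          ∃ A ∈ DualHalfSpaces r, OpProper (fun l => T (ε :: l)) ξ' A) with hSε
    have hsub : S.image Φ ⊆ (realizedFinset a b).biUnion (fun ε => {ε} ×ˢ Sε ε) := by
      intro pr hpr
      obtain ⟨ξ, hξ, rfl⟩ := Finset.mem_image.1 hpr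
      rw [hS, Finset.mem_filter] at hξ
      obtain ⟨-, A, hA, hprop⟩ := hξ
      obtain ⟨p, rfl⟩ := hA
      have hreal : realizes a b p (ξ 0) := by
        intro i
        have h := hprop 0 i
        have hm : (T [] i ∈ {H : HalfSpaces r | p ∈ H.1}) ↔ b i < dot (a i) p := by
          rw [Set.mem_setOf_eq, hab i]
          exact Iff.rfl
        exact hm.symm.trans h
      refine Finset.mem_biUnion.2 ⟨ξ 0, (mem_realizedFinset a b _).2 ⟨p, hreal⟩, ?_⟩
      rw [Finset.mem_product]
      refine ⟨Finset.mem_singleton_self _, ?_⟩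
      rw [hSε, Finset.mem_filter]
      refine ⟨Finset.mem_univ _, {H : HalfSpaces r | p ∈ H.1}, ⟨p, rfl⟩, ?_⟩
      intro j i
      have h := hprop j.succ i
      have hlist : (List.ofFn ξ).take ((j.succ : ℕ)) =
          ξ 0 :: (List.ofFn (fun j' : Fin n => ξ j'.succ)).take (j : ℕ) := by
        rw [List.ofFn_succ]
        rfl
      rw [hlist] at h
      exact h
    calc S.card = (S.image Φ).card := hScard
      _ ≤ ((realizedFinset a b).biUnion (fun ε => {ε} ×ˢ Sε ε)).card :=
          Finset.card_le_card hsub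
      _ ≤ ∑ ε ∈ realizedFinset a b, ({ε} ×ˢ Sε ε).card := Finset.card_biUnion_le
      _ = ∑ ε ∈ realizedFinset a b, (Sε ε).card := by
          refine Finset.sum_congr rfl fun ε _ => ?_
          rw [Finset.card_product, Finset.card_singleton, one_mul]
      _ ≤ ∑ _ε ∈ realizedFinset a b, (∑ i ∈ Finset.range (r+1), s.choose i) ^ n := by
          refine Finset.sum_le_sum fun ε _ => ?_
          have := IH (fun l => T (ε :: l))
          rwa [ncard_eq_filter_card] at this
      _ = (realizedFinset a b).card * (∑ i ∈ Finset.range (r+1), s.choose i) ^ n := by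
          rw [Finset.sum_const, smul_eq_mul]
      _ ≤ (∑ i ∈ Finset.range (r+1), s.choose i) * (∑ i ∈ Finset.range (r+1), s.choose i) ^ n :=
          Nat.mul_le_mul_right _ (realized_card_le a b)
      _ = (∑ i ∈ Finset.range (r+1), s.choose i) ^ (n + 1) := by
          rw [pow_succ, mul_comm]

end POLY

end OPS

/-- For the dual set system `F` of the set system of open half-spaces in `ℝ^r` (`r ≥ 1`):
for all `s ≥ 1` and `n ≥ 0`, `ψ^s_F(n) = (∑_{i=0}^{r} C(s,i))^n`; in particular
`opR_{r+1}(F) = 0`. -/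
theorem dual_halfspaces_shatter (r : ℕ) (hr : 1 ≤ r) :
    (∀ s n : ℕ, 1 ≤ s →
      opShatter (DualHalfSpaces r) s n = (∑ i ∈ Finset.range (r + 1), s.choose i) ^ n) ∧
    (HasOpTree (DualHalfSpaces r) (r + 1) 0 ∧
      ∀ m : ℕ, 0 < m → ¬ HasOpTree (DualHalfSpaces r) (r + 1) m) := by
  constructor
  · intro s n _
    rw [opShatter]
    have hmem : (∑ i ∈ Finset.range (r + 1), s.choose i) ^ n ∈
        {m : ℕ | ∃ T : List (Fin s → Bool) → (Fin s → HalfSpaces r),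
          m = {ξ : Fin n → (Fin s → Bool) | ∃ A ∈ DualHalfSpaces r, OpProper T ξ A}.ncard} :=
      ⟨OPS.theTree hr s, (OPS.tree_ncard hr s n).symm⟩
    have hbd : ∀ m ∈ {m : ℕ | ∃ T : List (Fin s → Bool) → (Fin s → HalfSpaces r),
        m = {ξ : Fin n → (Fin s → Bool) | ∃ A ∈ DualHalfSpaces r, OpProper T ξ A}.ncard},
        m ≤ (∑ i ∈ Finset.range (r + 1), s.choose i) ^ n := by
      rintro m ⟨T, rfl⟩
      exact OPS.ub hr n T
    exact le_antisymm (csSup_le ⟨_, hmem⟩ hbd) (le_csSup ⟨_, hbd⟩ hmem)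
  · constructor
    · refine ⟨fun _ _ => OPS.mkHS (fun _ => 1) 0 ?_, ?_⟩
      · intro h
        have := congrFun h ⟨0, hr⟩
        norm_num at this
      · intro ξ
        exact ⟨{H : HalfSpaces r | (0 : Fin r → ℝ) ∈ H.1}, ⟨0, rfl⟩, fun j => j.elim0⟩
    · rintro m hm ⟨T, hT⟩
      obtain ⟨a, b, hab⟩ := OPS.exists_arr (T [])
      obtain ⟨ε, hε⟩ := OPS.noShatter a b
      obtain ⟨A, hA, hprop⟩ := hT (fun _ => ε)
      obtain ⟨p, rfl⟩ := hA
      refine hε p ?_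
      intro i
      have h := hprop ⟨0, hm⟩ i
      have hm2 : (T [] i ∈ {H : HalfSpaces r | p ∈ H.1}) ↔ b i < OPS.dot (a i) p := by
        rw [Set.mem_setOf_eq, hab i]
        exact Iff.rfl
      exact hm2.symm.trans h
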